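/- Let n ≥ 1 and consider an interference network with signal gains s : Fin n → ℝ satisfying s(i) > 0 for all i, nonnegative interference coefficients c : Fin n → Fin n → ℝ with c(i,j) ≥ 0 for all i, j and c(i,i) = 0, and noise power N > 0. For a power vector p : Fin n → ℝ with p(i) ≥ 0 for all i, define its SINR vector z(p) componentwise by z(p)(i) = 1 + s(i)·p(i) / (Σ_j c(i,j)·p(j) + N). If p₁ and p₂ are two nonnegative power vectors whose SINR vectors satisfy z(p₁)(i) ≤ z(p₂)(i) for every i, then p₁(i) ≤ p₂(i) for every i. -/

import Mathlib

/-- If the SINR vectors of two nonnegative power vectors satisfy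
`z(p₁) ≤ z(p₂)` componentwise, then `p₁ ≤ p₂` componentwise. -/
theorem sinr_domination_implies_power_domination
    (n : ℕ) (hn : 1 ≤ n)
    (s : Fin n → ℝ) (hs : ∀ i, 0 < s i)
    (c : Fin n → Fin n → ℝ) (hc : ∀ i j, 0 ≤ c i j) (hcd : ∀ i, c i i = 0)
    (N : ℝ) (hN : 0 < N)
    (p₁ p₂ : Fin n → ℝ) (hp₁ : ∀ i, 0 ≤ p₁ i) (hp₂ : ∀ i, 0 ≤ p₂ i)
    (hz : ∀ i, 1 + s i * p₁ i / ((∑ j, c i j * p₁ j) + N)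
              ≤ 1 + s i * p₂ i / ((∑ j, c i j * p₂ j) + N)) :
    ∀ i, p₁ i ≤ p₂ i := by
  have hden₁ : ∀ i, 0 < (∑ j, c i j * p₁ j) + N := fun i => by
    have : 0 ≤ ∑ j, c i j * p₁ j :=
      Finset.sum_nonneg fun j _ => mul_nonneg (hc i j) (hp₁ j)
    linarith
  have hden₂ : ∀ i, 0 < (∑ j, c i j * p₂ j) + N := fun i => by
    have : 0 ≤ ∑ j, c i j * p₂ j :=
      Finset.sum_nonneg fun j _ => mul_nonneg (hc i j) (hp₂ j)
    linarith
  -- cross-multiplied inequality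
  have key : ∀ i, p₁ i * ((∑ j, c i j * p₂ j) + N) ≤ p₂ i * ((∑ j, c i j * p₁ j) + N) := by
    intro i
    have h := hz i
    have h' : s i * p₁ i / ((∑ j, c i j * p₁ j) + N)
        ≤ s i * p₂ i / ((∑ j, c i j * p₂ j) + N) := by linarith
    rw [div_le_div_iff₀ (hden₁ i) (hden₂ i)] at h'
    have hsi := hs i
    nlinarith [hden₁ i, hden₂ i]
  -- if p₂ i = 0 then p₁ i = 0
  have hzero : ∀ i, p₂ i = 0 → p₁ i = 0 := by
    intro i h0
    have := key i
    rw [h0] at this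
    have := hden₂ i
    have := hp₁ i
    nlinarith
  by_contra hcon
  push_neg at hcon
  obtain ⟨i₁, hi₁⟩ := hcon
  set r : Fin n → ℝ := fun i => p₁ i / p₂ i with hr
  have hne : (Finset.univ : Finset (Fin n)).Nonempty :=
    ⟨⟨0, hn⟩, Finset.mem_univ _⟩
  set t := Finset.univ.sup' hne r with ht
  obtain ⟨i₀, -, hi₀⟩ := Finset.exists_mem_eq_sup' hne r
  have hp₂i₁ : 0 < p₂ i₁ := by
    rcases lt_or_eq_of_le (hp₂ i₁) with h | h
    · exact h
    · exfalso; have := hzero i₁ h.symm; linarith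
  have ht1 : 1 < t := by
    have : r i₁ ≤ t := Finset.le_sup' r (Finset.mem_univ i₁)
    have : 1 < r i₁ := (one_lt_div hp₂i₁).mpr hi₁
    linarith [Finset.le_sup' r (Finset.mem_univ i₁)]
  have hp₂i₀ : 0 < p₂ i₀ := by
    rcases lt_or_eq_of_le (hp₂ i₀) with h | h
    · exact h
    · exfalso
      have h2 : (1:ℝ) < r i₀ := by rw [← hi₀, ← ht]; exact ht1
      have : r i₀ = 0 := by simp [hr, ← h]
      rw [this] at h2; linarith
  have hpi₀ : p₁ i₀ = t * p₂ i₀ := by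
    have : r i₀ = t := hi₀.symm
    simp only [hr] at this
    field_simp [hr, ne_of_gt hp₂i₀] at this
    linarith [this]
  have hdom : ∀ j, p₁ j ≤ t * p₂ j := by
    intro j
    rcases lt_or_eq_of_le (hp₂ j) with h | h
    · have hrj : r j ≤ t := Finset.le_sup' r (Finset.mem_univ j)
      have : p₁ j / p₂ j ≤ t := hrj
      rw [div_le_iff₀ h] at this
      linarith [this]
    · have := hzero j h.symm
      rw [this, ← h]
      nlinarith
  have hI : (∑ j, c i₀ j * p₁ j) ≤ t * ∑ j, c i₀ j * p₂ j := by
    rw [Finset.mul_sum]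
    apply Finset.sum_le_sum
    intro j _
    have := hdom j
    nlinarith [hc i₀ j]
  have := key i₀
  rw [hpi₀] at this
  have hI₂ : 0 ≤ ∑ j, c i₀ j * p₂ j :=
    Finset.sum_nonneg fun j _ => mul_nonneg (hc i₀ j) (hp₂ j)
  nlinarith [mul_le_mul_of_nonneg_left hI (le_of_lt hp₂i₀), mul_pos hp₂i₀ hN]
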